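/- Let T be a perfect pruned tree and k ∈ ℕ. Then T⟦k⟧ is a perfect pruned tree with stem(T⟦k⟧) = σ_k(T). Moreover, for every perfect pruned subtree S of T⟦k⟧, stem(S) extends σ_k(T); consequently stem(S) does not belong to Nar(T), and stem(S) is not an initial segment of any element of Nar(T). -/

import Mathlib

open scoped Classical

/-- `σ` is an initial segment of the infinite binary sequence `X`. -/
def PrefixOf (σ : List Bool) (X : ℕ → Bool) : Prop :=
  σ = (List.range σ.length).map X

/-- A tree is a set of finite binary strings closed under initial segments. -/
def IsTree (T : Set (List Bool)) : Prop :=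
  ∀ s t : List Bool, s <+: t → t ∈ T → s ∈ T

/-- `[T]`, the set of infinite paths of `T`: those `X` all of whose initial segments
are in `T`. -/
def treePaths (T : Set (List Bool)) : Set (ℕ → Bool) :=
  {X | ∀ n : ℕ, (List.range n).map X ∈ T}

/-- `T` is pruned: every node has a proper extension in `T`. -/
def Pruned (T : Set (List Bool)) : Prop :=
  ∀ s ∈ T, ∃ t ∈ T, s <+: t ∧ s ≠ t

/-- Two strings are incomparable if neither is an initial segment of the other. -/
def Incomparable (s t : List Bool) : Prop := ¬ s <+: t ∧ ¬ t <+: s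

/-- `T` is perfect: every node of `T` has two incomparable extensions in `T`. -/
def PerfectTree (T : Set (List Bool)) : Prop :=
  ∀ s ∈ T, ∃ t₁ ∈ T, ∃ t₂ ∈ T, s <+: t₁ ∧ s <+: t₂ ∧ Incomparable t₁ t₂

/-- A (nonempty) perfect pruned tree. -/
def PPTree (T : Set (List Bool)) : Prop :=
  T.Nonempty ∧ IsTree T ∧ Pruned T ∧ PerfectTree T

/-- `s` is a branching node of `T`: both children `s⌢0` and `s⌢1` are in `T`. -/
def Branching (T : Set (List Bool)) (s : List Bool) : Prop :=
  s ∈ T ∧ s ++ [false] ∈ T ∧ s ++ [true] ∈ T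

/-- `s` is a shortest branching node of `T`. -/
def IsStem (T : Set (List Bool)) (s : List Bool) : Prop :=
  Branching T s ∧ ∀ t : List Bool, Branching T t → s.length ≤ t.length

/-- `stem T`: the shortest branching node of `T` (unique for a perfect pruned tree). -/
noncomputable def stem (T : Set (List Bool)) : List Bool :=
  if h : ∃ s, IsStem T s then h.choose else []

/-- The shortest branching node of `T` extending `ρ`
(unique for a perfect pruned tree when `ρ ∈ T`). -/
noncomputable def nextBranch (T : Set (List Bool)) (ρ : List Bool) : List Bool :=
  if h : ∃ s : List Bool, ρ <+: s ∧ Branching T s ∧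
      ∀ t : List Bool, ρ <+: t → Branching T t → s.length ≤ t.length then
    h.choose
  else ρ

/-- `ψ_T`, the order-preserving map onto the branching nodes of `T`:
`ψ_T(ε) = stem(T)` and `ψ_T(σ⌢i)` is the shortest branching node of `T`
extending `ψ_T(σ)⌢i`. -/
noncomputable def psi (T : Set (List Bool)) (σ : List Bool) : List Bool :=
  σ.foldl (fun τ i => nextBranch T (τ ++ [i])) (stem T)

/-- `τ` is of the form `ψ_T(σ⌢1)` for a string `σ` of odd length. -/
def FormNode (T : Set (List Bool)) (τ : List Bool) : Prop :=
  ∃ σ : List Bool, Odd σ.length ∧ τ = psi T (σ ++ [true])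

/-- The set of nodes `σ_k(T)`, `k ∈ ℕ`: the minimal nodes of `T` of the form
`ψ_T(σ⌢1)` for `σ` of odd length (no proper initial segment is of this form). -/
def sigmaSet (T : Set (List Bool)) : Set (List Bool) :=
  {τ | FormNode T τ ∧ ∀ ρ : List Bool, ρ <+: τ → ρ ≠ τ → ¬ FormNode T ρ}

/-- `Nar(T)`, the narrow subtree of `T`: the nodes lying on some path of `T`
passing through no `σ_k(T)`. -/
def Nar (T : Set (List Bool)) : Set (List Bool) :=
  {τ | τ ∈ T ∧ ∃ X ∈ treePaths T, PrefixOf τ X ∧ ∀ ρ ∈ sigmaSet T, ¬ PrefixOf ρ X}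

/-- `T⟦ρ⟧`, the full subtree of `T` issuing from `ρ`: the nodes of `T`
comparable with `ρ`. -/
def fullSub (T : Set (List Bool)) (ρ : List Bool) : Set (List Bool) :=
  {τ ∈ T | ρ <+: τ ∨ τ <+: ρ}

lemma prefixOf_mono {ρ τ : List Bool} {X : ℕ → Bool} (h : ρ <+: τ) (hτ : PrefixOf τ X) :
    PrefixOf ρ X := by
  unfold PrefixOf at *
  have h1 : ρ = τ.take ρ.length := List.prefix_iff_eq_take.1 h
  have h2 : ρ.length ≤ τ.length := h.length_le
  conv_lhs => rw [h1, hτ]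
  rw [← List.map_take, List.take_range, min_eq_left h2]

/-- Fork lemma: incomparable strings branch at a common point. -/
lemma exists_fork {s t : List Bool} (hst : ¬ s <+: t) (hts : ¬ t <+: s) :
    ∃ u : List Bool, ∃ a b : Bool, a ≠ b ∧ u ++ [a] <+: s ∧ u ++ [b] <+: t ∧
      ∀ v : List Bool, v <+: s → v <+: t → v.length ≤ u.length := by
  have hex : ∃ n, s.take n ≠ t.take n := by
    refine ⟨min s.length t.length, fun hmin => ?_⟩
    rcases le_total s.length t.length with hle | hle
    · rw [min_eq_left hle, List.take_of_length_le le_rfl] at hmin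
      exact hst (hmin ▸ List.take_prefix _ _)
    · rw [min_eq_right hle, List.take_of_length_le le_rfl] at hmin
      exact hts (hmin.symm ▸ List.take_prefix _ _)
  set n := Nat.find hex with hn
  have hne : s.take n ≠ t.take n := Nat.find_spec hex
  have hn0 : n ≠ 0 := by
    intro h0
    apply hne; rw [h0]; simp
  obtain ⟨m, hm⟩ := Nat.exists_eq_succ_of_ne_zero hn0
  have heq : s.take m = t.take m := by
    by_contra hc
    exact absurd (Nat.find_min' hex hc) (by omega)
  have hms : m < s.length := by
    by_contra hc
    push_neg at hc
    apply hst
    have : s = t.take m := by rw [← heq, List.take_of_length_le hc]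
    exact this ▸ List.take_prefix _ _
  have hmt : m < t.length := by
    by_contra hc
    push_neg at hc
    apply hts
    have : t = s.take m := by rw [heq, List.take_of_length_le hc]
    exact this ▸ List.take_prefix _ _
  refine ⟨s.take m, s[m], t[m], ?_, ?_, ?_, ?_⟩
  · intro hab
    apply hne
    rw [hm, List.take_succ, List.take_succ, heq,
      List.getElem?_eq_getElem hms, List.getElem?_eq_getElem hmt, hab]
  · have : s.take m ++ [s[m]] = s.take (m+1) := by
      rw [List.take_succ, List.getElem?_eq_getElem hms]; rfl
    exact this ▸ List.take_prefix _ _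
  · have : s.take m ++ [t[m]] = t.take (m+1) := by
      rw [List.take_succ, List.getElem?_eq_getElem hmt, heq]; rfl
    exact this ▸ List.take_prefix _ _
  · intro v hvs hvt
    by_contra hc
    push_neg at hc
    have hlen : m + 1 ≤ v.length := by
      have : (s.take m).length = min m s.length := List.length_take
      omega
    apply hne
    rw [hm]
    have h1 : s.take (m+1) = v.take (m+1) := by
      rw [List.prefix_iff_eq_take.1 hvs, List.take_take, min_eq_left hlen]
    have h2 : t.take (m+1) = v.take (m+1) := by
      rw [List.prefix_iff_eq_take.1 hvt, List.take_take, min_eq_left hlen]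
    rw [h1, h2]

lemma exists_branching_ext {T : Set (List Bool)} (hTree : IsTree T) (hP : PerfectTree T)
    {s : List Bool} (hs : s ∈ T) : ∃ u, s <+: u ∧ Branching T u := by
  obtain ⟨t₁, ht₁, t₂, ht₂, hs1, hs2, h12, h21⟩ := hP s hs
  obtain ⟨u, a, b, hab, hua, hub, hmin⟩ := exists_fork h12 h21
  have huT : u ∈ T := hTree _ _ ((List.prefix_append _ _).trans hua) ht₁
  have haT : u ++ [a] ∈ T := hTree _ _ hua ht₁
  have hbT : u ++ [b] ∈ T := hTree _ _ hub ht₂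
  have hbr : Branching T u := by
    refine ⟨huT, ?_, ?_⟩ <;> rcases a with _ | _ <;> rcases b with _ | _ <;>
      first | assumption | exact absurd rfl hab
  refine ⟨u, ?_, hbr⟩
  have hlen : s.length ≤ u.length := hmin s hs1 hs2
  rcases List.prefix_or_prefix_of_prefix hs1 ((List.prefix_append _ _).trans hua) with h | h
  · exact h
  · exact (h.eq_of_length (le_antisymm h.length_le hlen)) ▸ List.prefix_rfl

lemma exists_isStem {T : Set (List Bool)} (hT : PPTree T) : ∃ s, IsStem T s := by
  obtain ⟨⟨s, hs⟩, hTree, _, hP⟩ := hT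
  obtain ⟨u, _, hu⟩ := exists_branching_ext hTree hP hs
  have hex : ∃ n, ∃ t : List Bool, Branching T t ∧ t.length = n := ⟨u.length, u, hu, rfl⟩
  obtain ⟨t, ht, htl⟩ := Nat.find_spec hex
  refine ⟨t, ht, fun t' ht' => ?_⟩
  rw [htl]
  exact Nat.find_min' hex ⟨t', ht', rfl⟩

lemma stem_unique {T : Set (List Bool)} (hTree : IsTree T) {s t : List Bool}
    (hs : IsStem T s) (ht : IsStem T t) : s = t := by
  have hlen : s.length = t.length := le_antisymm (hs.2 t ht.1) (ht.2 s hs.1)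
  by_contra hne
  have hst : ¬ s <+: t := fun h => hne (h.eq_of_length hlen)
  have hts : ¬ t <+: s := fun h => hne (h.eq_of_length hlen.symm).symm
  obtain ⟨u, a, b, hab, hua, hub, _⟩ := exists_fork hst hts
  have huT : u ∈ T := hTree _ _ ((List.prefix_append _ _).trans hua) hs.1.1
  have haT : u ++ [a] ∈ T := hTree _ _ hua hs.1.1
  have hbT : u ++ [b] ∈ T := hTree _ _ hub ht.1.1
  have hbr : Branching T u := by
    refine ⟨huT, ?_, ?_⟩ <;> rcases a with _ | _ <;> rcases b with _ | _ <;>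
      first | assumption | exact absurd rfl hab
  have := hs.2 u hbr
  have hl : u.length + 1 ≤ s.length := by simpa using hua.length_le
  omega

lemma stem_eq_of_isStem {T : Set (List Bool)} (hTree : IsTree T) {s : List Bool}
    (hs : IsStem T s) : stem T = s := by
  have hex : ∃ s, IsStem T s := ⟨s, hs⟩
  rw [stem, dif_pos hex]
  exact stem_unique hTree hex.choose_spec hs

lemma nextBranch_spec {T : Set (List Bool)} (hT : PPTree T) {ρ : List Bool} (hρ : ρ ∈ T) :
    ρ <+: nextBranch T ρ ∧ Branching T (nextBranch T ρ) := by
  obtain ⟨u, hu, hbu⟩ := exists_branching_ext hT.2.1 hT.2.2.2 hρ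
  have hex0 : ∃ n, ∃ t : List Bool, (ρ <+: t ∧ Branching T t) ∧ t.length = n :=
    ⟨u.length, u, ⟨hu, hbu⟩, rfl⟩
  obtain ⟨t, ⟨htp, htb⟩, htl⟩ := Nat.find_spec hex0
  have hex : ∃ s : List Bool, ρ <+: s ∧ Branching T s ∧
      ∀ t : List Bool, ρ <+: t → Branching T t → s.length ≤ t.length := by
    refine ⟨t, htp, htb, fun t' hp' hb' => ?_⟩
    rw [htl]
    exact Nat.find_min' hex0 ⟨t', ⟨hp', hb'⟩, rfl⟩
  rw [nextBranch, dif_pos hex]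
  exact ⟨hex.choose_spec.1, hex.choose_spec.2.1⟩

lemma foldl_branching {T : Set (List Bool)} (hT : PPTree T) (σ : List Bool) :
    ∀ τ : List Bool, Branching T τ →
      Branching T (σ.foldl (fun τ i => nextBranch T (τ ++ [i])) τ) := by
  induction σ with
  | nil => exact fun τ hτ => hτ
  | cons i σ ih =>
    intro τ hτ
    simp only [List.foldl_cons]
    apply ih
    have hmem : τ ++ [i] ∈ T := by
      rcases i with _ | _
      · exact hτ.2.1
      · exact hτ.2.2
    exact (nextBranch_spec hT hmem).2

lemma stem_branching {T : Set (List Bool)} (hT : PPTree T) : Branching T (stem T) := by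
  rw [stem_eq_of_isStem hT.2.1 (exists_isStem hT).choose_spec]
  exact (exists_isStem hT).choose_spec.1

lemma psi_branching {T : Set (List Bool)} (hT : PPTree T) (σ : List Bool) :
    Branching T (psi T σ) :=
  foldl_branching hT σ (stem T) (stem_branching hT)


/-- For a perfect pruned tree `T` and `ρ = σ_k(T)`, the full subtree `T⟦k⟧` is a
perfect pruned tree with `stem(T⟦k⟧) = σ_k(T)`; moreover for every perfect pruned
subtree `S` of `T⟦k⟧`, `stem(S)` extends `σ_k(T)`, hence `stem(S) ∉ Nar(T)` and
`stem(S)` is not an initial segment of any element of `Nar(T)`. -/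
theorem stmt13 (T : Set (List Bool)) (hT : PPTree T)
    (ρ : List Bool) (hρ : ρ ∈ sigmaSet T) :
    PPTree (fullSub T ρ) ∧ stem (fullSub T ρ) = ρ ∧
      ∀ S : Set (List Bool), PPTree S → S ⊆ fullSub T ρ →
        ρ <+: stem S ∧ stem S ∉ Nar T ∧ ∀ τ ∈ Nar T, ¬ stem S <+: τ := by
  obtain ⟨hne, hTree, hPr, hPf⟩ := hT
  obtain ⟨σ0, -, hψ⟩ := hρ.1
  have hρbr : Branching T ρ := hψ ▸ psi_branching ⟨hne, hTree, hPr, hPf⟩ _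
  have hρT : ρ ∈ T := hρbr.1
  have hρF : ρ ∈ fullSub T ρ := ⟨hρT, Or.inl List.prefix_rfl⟩
  have hρfF : ρ ++ [false] ∈ fullSub T ρ := ⟨hρbr.2.1, Or.inl (List.prefix_append _ _)⟩
  have hρtF : ρ ++ [true] ∈ fullSub T ρ := ⟨hρbr.2.2, Or.inl (List.prefix_append _ _)⟩
  have hTreeF : IsTree (fullSub T ρ) := by
    rintro s t hst ⟨htT, hcomp⟩
    refine ⟨hTree s t hst htT, ?_⟩
    rcases hcomp with h | h
    · exact List.prefix_or_prefix_of_prefix h hst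
    · exact Or.inr (hst.trans h)
  have hPrF : Pruned (fullSub T ρ) := by
    rintro s ⟨hsT, hcomp⟩
    rcases hcomp with h | h
    · obtain ⟨t, htT, hst, hne'⟩ := hPr s hsT
      exact ⟨t, ⟨htT, Or.inl (h.trans hst)⟩, hst, hne'⟩
    · by_cases hsρ : s = ρ
      · subst hsρ
        exact ⟨s ++ [true], hρtF, List.prefix_append _ _, by simp⟩
      · exact ⟨ρ, hρF, h, hsρ⟩
  have hincρ : Incomparable (ρ ++ [false]) (ρ ++ [true]) := by
    constructor <;> intro hp <;>
      · have := hp.eq_of_length (by simp)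
        simp at this
  have hPfF : PerfectTree (fullSub T ρ) := by
    rintro s ⟨hsT, hcomp⟩
    rcases hcomp with h | h
    · obtain ⟨t₁, h1, t₂, h2, p1, p2, hinc⟩ := hPf s hsT
      exact ⟨t₁, ⟨h1, Or.inl (h.trans p1)⟩, t₂, ⟨h2, Or.inl (h.trans p2)⟩, p1, p2, hinc⟩
    · exact ⟨ρ ++ [false], hρfF, ρ ++ [true], hρtF,
        h.trans (List.prefix_append _ _), h.trans (List.prefix_append _ _), hincρ⟩
  have hPPF : PPTree (fullSub T ρ) := ⟨⟨ρ, hρF⟩, hTreeF, hPrF, hPfF⟩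
  have hbrext : ∀ t, Branching (fullSub T ρ) t → ρ <+: t := by
    rintro t ⟨⟨htT, hcomp⟩, hf, ht'⟩
    rcases hcomp with h | h
    · exact h
    · by_cases htρ : t = ρ
      · exact htρ ▸ List.prefix_rfl
      · exfalso
        have hlt : t.length < ρ.length :=
          lt_of_le_of_ne h.length_le (fun he => htρ (h.eq_of_length he))
        have key : ∀ b : Bool, t ++ [b] ∈ fullSub T ρ → t ++ [b] <+: ρ := by
          rintro b ⟨-, h2 | h2⟩
          · have hle : ρ.length ≤ t.length + 1 := by simpa using h2.length_le
            have : ρ = t ++ [b] := h2.eq_of_length (by simp; omega)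
            exact this ▸ List.prefix_rfl
          · exact h2
        have h1 := key false hf
        have h2 := key true ht'
        rcases List.prefix_or_prefix_of_prefix h1 h2 with hq | hq <;>
          · have := hq.eq_of_length (by simp)
            simp at this
  have hisstem : IsStem (fullSub T ρ) ρ :=
    ⟨⟨hρF, hρfF, hρtF⟩, fun t ht => (hbrext t ht).length_le⟩
  refine ⟨hPPF, stem_eq_of_isStem hTreeF hisstem, ?_⟩
  intro S hS hSsub
  have hbS : Branching S (stem S) := stem_branching hS
  have hbrS : Branching (fullSub T ρ) (stem S) :=
    ⟨hSsub hbS.1, hSsub hbS.2.1, hSsub hbS.2.2⟩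
  have hρstem : ρ <+: stem S := hbrext _ hbrS
  refine ⟨hρstem, ?_, ?_⟩
  · rintro ⟨-, X, hX, hpre, hno⟩
    exact hno ρ hρ (prefixOf_mono hρstem hpre)
  · rintro τ ⟨-, X, hX, hpre, hno⟩ hst
    exact hno ρ hρ (prefixOf_mono (hρstem.trans hst) hpre)
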